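/- For p-th order banded Toeplitz-minus-Hankel coefficient matrices A_s = T^(α^(s),m) - H^(α^(s),m), s = 0,…,q, the polynomial eigenvalue problem (∑_{s=0}^q λ^s A_s) x = 0 has, for each j = 1,…,n, the eigenvector x_j with entries x_{j,k} = sin(jπkh) (h = 1/(n+1)) associated with any root λ of the scalar polynomial ∑_{s=0}^q λ^s (α_0^(s) + 2∑_{l=1}^m α_l^(s) cos(l j π h)) = 0. -/

import Mathlib

open Matrix Real Finset

lemma rowsum (n m : ℕ) (hn : 2 ≤ n) (hm2 : m ≤ n - 1) (ξ : ℕ → ℂ)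
    (g : ℤ → ℂ) (c : ℕ → ℂ)
    (hg0 : g 0 = 0) (hgn : g ((n : ℤ) + 1) = 0)
    (hodd : ∀ t : ℤ, g (-t) = - g t)
    (hrefl : ∀ t : ℤ, g (2*((n:ℤ)+1) - t) = - g t)
    (hcos : ∀ (a : ℤ) (l : ℕ), g (a - (l:ℤ)) + g (a + (l:ℤ)) = c l * g a)
    (i : ℕ) (hi : i < n) :
    ∑ k ∈ Finset.range n,
      ((if max i k - min i k ≤ m then ξ (max i k - min i k) else 0)
        - (if i + k + 2 ≤ m then ξ (i+k+2)
           else if 2*n - (i+k) ≤ m then ξ (2*n - (i+k)) else 0)) * g ((k:ℤ)+1)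
    = (ξ 0 + ∑ l ∈ Finset.Icc 1 m, ξ l * c l) * g ((i:ℤ)+1) := by
  have hmn : m < n := by omega
  -- pointwise decomposition
  have key : ∀ k ∈ Finset.range n,
      ((if max i k - min i k ≤ m then ξ (max i k - min i k) else 0)
        - (if i + k + 2 ≤ m then ξ (i+k+2)
           else if 2*n - (i+k) ≤ m then ξ (2*n - (i+k)) else 0)) * g ((k:ℤ)+1)
    = (if k < i ∧ i - k ≤ m then ξ (i-k) else 0) * g ((k:ℤ)+1)
      + (if k = i then ξ 0 else 0) * g ((k:ℤ)+1)
      + (if i < k ∧ k - i ≤ m then ξ (k-i) else 0) * g ((k:ℤ)+1)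
      - (if i+k+2 ≤ m then ξ (i+k+2) else 0) * g ((k:ℤ)+1)
      - (if 2*n - (i+k) ≤ m then ξ (2*n-(i+k)) else 0) * g ((k:ℤ)+1) := by
    intro k hk
    simp only [Finset.mem_range] at hk
    have hH' : (if i+k+2 ≤ m then ξ (i+k+2)
           else if 2*n - (i+k) ≤ m then ξ (2*n - (i+k)) else 0)
        = (if i+k+2 ≤ m then ξ (i+k+2) else 0)
          + (if 2*n - (i+k) ≤ m then ξ (2*n-(i+k)) else 0) := by
      by_cases c1 : i+k+2 ≤ m
      · rw [if_pos c1, if_pos c1, if_neg (by omega), add_zero]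
      · rw [if_neg c1, if_neg c1, zero_add]
    have hT' : (if max i k - min i k ≤ m then ξ (max i k - min i k) else 0)
        = (if k < i ∧ i - k ≤ m then ξ (i-k) else 0)
          + (if k = i then ξ 0 else 0)
          + (if i < k ∧ k - i ≤ m then ξ (k-i) else 0) := by
      rcases Nat.lt_trichotomy k i with hlt|heq|hgt
      · have h1 : max i k - min i k = i - k := by omega
        rw [h1, if_neg (by omega : ¬ k = i),
          if_neg (by omega : ¬ (i < k ∧ k - i ≤ m)), add_zero, add_zero]
        by_cases h2 : i - k ≤ m
        · rw [if_pos h2, if_pos ⟨hlt, h2⟩]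
        · rw [if_neg h2, if_neg (fun hc => h2 hc.2)]
      · subst heq
        have h1 : max k k - min k k = 0 := by omega
        rw [h1, if_pos (Nat.zero_le m), if_pos rfl,
          if_neg (by omega : ¬ (k < k ∧ k - k ≤ m))]
        ring
      · have h1 : max i k - min i k = k - i := by omega
        rw [h1, if_neg (by omega : ¬ (k < i ∧ i - k ≤ m)),
          if_neg (by omega : ¬ k = i), zero_add, zero_add]
        by_cases h2 : k - i ≤ m
        · rw [if_pos h2, if_pos ⟨hgt, h2⟩]
        · rw [if_neg h2, if_neg (fun hc => h2 hc.2)]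
    rw [hT', hH']
    ring
  rw [Finset.sum_congr rfl key]
  simp only [ite_mul, zero_mul]
  simp only [Finset.sum_sub_distrib, Finset.sum_add_distrib]
  -- middle term
  have hmid : (∑ k ∈ Finset.range n, if k = i then ξ 0 * g ((k:ℤ)+1) else 0)
      = ξ 0 * g ((i:ℤ)+1) := by
    rw [Finset.sum_ite_eq' (Finset.range n) i (fun k => ξ 0 * g ((k:ℤ)+1)),
      if_pos (Finset.mem_range.mpr hi)]
  -- left Toeplitz
  have hSL : (∑ k ∈ Finset.range n, if k < i ∧ i - k ≤ m then ξ (i-k) * g ((k:ℤ)+1) else 0)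
      = ∑ l ∈ Finset.Icc 1 m, (if l ≤ i then ξ l * g ((i:ℤ)+1-(l:ℤ)) else 0) := by
    rw [← Finset.sum_filter, ← Finset.sum_filter]
    apply Finset.sum_nbij' (fun k => i - k) (fun l => i - l)
    · intro a ha; simp only [Finset.mem_filter, Finset.mem_range, Finset.mem_Icc] at *; omega
    · intro a ha; simp only [Finset.mem_filter, Finset.mem_range, Finset.mem_Icc] at *; omega
    · intro a ha; simp only [Finset.mem_filter, Finset.mem_range, Finset.mem_Icc] at *; omega
    · intro a ha; simp only [Finset.mem_filter, Finset.mem_range, Finset.mem_Icc] at *; omega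
    · intro a ha
      simp only [Finset.mem_filter, Finset.mem_range] at ha
      have e1 : ((a:ℤ)+1) = (i:ℤ)+1-((i-a : ℕ):ℤ) := by omega
      rw [e1]
  -- right Toeplitz
  have hSR : (∑ k ∈ Finset.range n, if i < k ∧ k - i ≤ m then ξ (k-i) * g ((k:ℤ)+1) else 0)
      = ∑ l ∈ Finset.Icc 1 m, (if i + l + 1 ≤ n then ξ l * g ((i:ℤ)+1+(l:ℤ)) else 0) := by
    rw [← Finset.sum_filter, ← Finset.sum_filter]
    apply Finset.sum_nbij' (fun k => k - i) (fun l => i + l)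
    · intro a ha; simp only [Finset.mem_filter, Finset.mem_range, Finset.mem_Icc] at *; omega
    · intro a ha; simp only [Finset.mem_filter, Finset.mem_range, Finset.mem_Icc] at *; omega
    · intro a ha; simp only [Finset.mem_filter, Finset.mem_range, Finset.mem_Icc] at *; omega
    · intro a ha; simp only [Finset.mem_filter, Finset.mem_range, Finset.mem_Icc] at *; omega
    · intro a ha
      simp only [Finset.mem_filter, Finset.mem_range] at ha
      have e1 : ((a:ℤ)+1) = (i:ℤ)+1+((a-i : ℕ):ℤ) := by omega
      rw [e1]
  -- Hankel top-left
  have hHL : (∑ k ∈ Finset.range n, if i+k+2 ≤ m then ξ (i+k+2) * g ((k:ℤ)+1) else 0)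
      = ∑ l ∈ Finset.Icc 1 m, (if i + 2 ≤ l then ξ l * g ((l:ℤ)-(i:ℤ)-1) else 0) := by
    rw [← Finset.sum_filter, ← Finset.sum_filter]
    apply Finset.sum_nbij' (fun k => i + k + 2) (fun l => l - i - 2)
    · intro a ha; simp only [Finset.mem_filter, Finset.mem_range, Finset.mem_Icc] at *; omega
    · intro a ha; simp only [Finset.mem_filter, Finset.mem_range, Finset.mem_Icc] at *; omega
    · intro a ha; simp only [Finset.mem_filter, Finset.mem_range, Finset.mem_Icc] at *; omega
    · intro a ha; simp only [Finset.mem_filter, Finset.mem_range, Finset.mem_Icc] at *; omega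
    · intro a ha
      simp only [Finset.mem_filter, Finset.mem_range] at ha
      have e1 : ((a:ℤ)+1) = ((i+a+2 : ℕ):ℤ)-(i:ℤ)-1 := by omega
      rw [e1]
  -- Hankel bottom-right
  have hHR : (∑ k ∈ Finset.range n, if 2*n - (i+k) ≤ m then ξ (2*n-(i+k)) * g ((k:ℤ)+1) else 0)
      = ∑ l ∈ Finset.Icc 1 m, (if n + 1 ≤ i + l then ξ l * g (2*(n:ℤ)+1-(i:ℤ)-(l:ℤ)) else 0) := by
    rw [← Finset.sum_filter, ← Finset.sum_filter]
    apply Finset.sum_nbij' (fun k => 2*n - (i+k)) (fun l => 2*n - (i+l))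
    · intro a ha; simp only [Finset.mem_filter, Finset.mem_range, Finset.mem_Icc] at *; omega
    · intro a ha; simp only [Finset.mem_filter, Finset.mem_range, Finset.mem_Icc] at *; omega
    · intro a ha; simp only [Finset.mem_filter, Finset.mem_range, Finset.mem_Icc] at *; omega
    · intro a ha; simp only [Finset.mem_filter, Finset.mem_range, Finset.mem_Icc] at *; omega
    · intro a ha
      simp only [Finset.mem_filter, Finset.mem_range] at ha
      have e1 : ((a:ℤ)+1) = 2*(n:ℤ)+1-(i:ℤ)-((2*n-(i+a) : ℕ):ℤ) := by omega
      rw [e1]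
  rw [hmid, hSL, hSR, hHL, hHR]
  -- combine the four Icc sums
  have hbr : ∀ l ∈ Finset.Icc 1 m,
      (if l ≤ i then ξ l * g ((i:ℤ)+1-(l:ℤ)) else 0)
      + (if i + l + 1 ≤ n then ξ l * g ((i:ℤ)+1+(l:ℤ)) else 0)
      - (if i + 2 ≤ l then ξ l * g ((l:ℤ)-(i:ℤ)-1) else 0)
      - (if n + 1 ≤ i + l then ξ l * g (2*(n:ℤ)+1-(i:ℤ)-(l:ℤ)) else 0)
      = ξ l * c l * g ((i:ℤ)+1) := by
    intro l hl
    simp only [Finset.mem_Icc] at hl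
    have e1 : (if l ≤ i then ξ l * g ((i:ℤ)+1-(l:ℤ)) else 0)
        - (if i + 2 ≤ l then ξ l * g ((l:ℤ)-(i:ℤ)-1) else 0)
        = ξ l * g ((i:ℤ)+1-(l:ℤ)) := by
      by_cases h1 : l ≤ i
      · rw [if_pos h1, if_neg (by omega), sub_zero]
      · by_cases h2 : i + 2 ≤ l
        · rw [if_neg h1, if_pos h2]
          have e : ((i:ℤ)+1-(l:ℤ)) = -((l:ℤ)-(i:ℤ)-1) := by ring
          rw [e, hodd]; ring
        · have hl1 : l = i + 1 := by omega
          rw [if_neg h1, if_neg h2, hl1]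
          have e : ((i:ℤ)+1-((i+1:ℕ):ℤ)) = 0 := by push_cast; ring
          rw [e, hg0]; ring
    have e2 : (if i + l + 1 ≤ n then ξ l * g ((i:ℤ)+1+(l:ℤ)) else 0)
        - (if n + 1 ≤ i + l then ξ l * g (2*(n:ℤ)+1-(i:ℤ)-(l:ℤ)) else 0)
        = ξ l * g ((i:ℤ)+1+(l:ℤ)) := by
      by_cases h1 : i + l + 1 ≤ n
      · rw [if_pos h1, if_neg (by omega), sub_zero]
      · by_cases h2 : n + 1 ≤ i + l
        · rw [if_neg h1, if_pos h2]
          have e : ((i:ℤ)+1+(l:ℤ)) = 2*((n:ℤ)+1) - (2*(n:ℤ)+1-(i:ℤ)-(l:ℤ)) := by ring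
          rw [e, hrefl]; ring
        · have hl1 : i + l = n := by omega
          rw [if_neg h1, if_neg h2, sub_zero]
          have e : ((i:ℤ)+1+(l:ℤ)) = (n:ℤ)+1 := by omega
          rw [e, hgn, mul_zero]
    have e3 := hcos ((i:ℤ)+1) l
    linear_combination e1 + e2 + ξ l * e3
  calc (∑ l ∈ Finset.Icc 1 m, if l ≤ i then ξ l * g ((i:ℤ)+1-(l:ℤ)) else 0)
        + ξ 0 * g ((i:ℤ)+1)
        + (∑ l ∈ Finset.Icc 1 m, if i + l + 1 ≤ n then ξ l * g ((i:ℤ)+1+(l:ℤ)) else 0)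
        - (∑ l ∈ Finset.Icc 1 m, if i + 2 ≤ l then ξ l * g ((l:ℤ)-(i:ℤ)-1) else 0)
        - (∑ l ∈ Finset.Icc 1 m, if n + 1 ≤ i + l then ξ l * g (2*(n:ℤ)+1-(i:ℤ)-(l:ℤ)) else 0)
      = ξ 0 * g ((i:ℤ)+1) + ∑ l ∈ Finset.Icc 1 m,
          ((if l ≤ i then ξ l * g ((i:ℤ)+1-(l:ℤ)) else 0)
          + (if i + l + 1 ≤ n then ξ l * g ((i:ℤ)+1+(l:ℤ)) else 0)
          - (if i + 2 ≤ l then ξ l * g ((l:ℤ)-(i:ℤ)-1) else 0)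
          - (if n + 1 ≤ i + l then ξ l * g (2*(n:ℤ)+1-(i:ℤ)-(l:ℤ)) else 0)) := by
        simp only [Finset.sum_sub_distrib, Finset.sum_add_distrib]; ring
    _ = ξ 0 * g ((i:ℤ)+1) + ∑ l ∈ Finset.Icc 1 m, ξ l * c l * g ((i:ℤ)+1) := by
        rw [Finset.sum_congr rfl hbr]
    _ = (ξ 0 + ∑ l ∈ Finset.Icc 1 m, ξ l * c l) * g ((i:ℤ)+1) := by
        rw [← Finset.sum_mul]; ring

theorem stmt9 (n m q : ℕ) (hn : 2 ≤ n) (hm1 : 1 ≤ m) (hm2 : m ≤ n - 1) (hq : 1 ≤ q)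
    (α : ℕ → ℕ → ℂ)
    (T H : (ℕ → ℂ) → Matrix (Fin n) (Fin n) ℂ)
    (hT : ∀ (ξ : ℕ → ℂ) (i j : Fin n), T ξ i j =
      if max i.1 j.1 - min i.1 j.1 ≤ m then ξ (max i.1 j.1 - min i.1 j.1) else 0)
    (hH : ∀ (ξ : ℕ → ℂ) (i j : Fin n), H ξ i j =
      if i.1 + j.1 + 2 ≤ m then ξ (i.1 + j.1 + 2)
      else if 2 * n - (i.1 + j.1) ≤ m then ξ (2 * n - (i.1 + j.1)) else 0)
    (A : ℕ → Matrix (Fin n) (Fin n) ℂ)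
    (hA : ∀ s, s ≤ q → A s = T (α s) - H (α s))
    (h : ℝ) (hh : h = 1 / (n + 1)) :
    ∀ j : Fin n, ∀ lam : ℂ,
      (∑ s ∈ Finset.range (q + 1), lam ^ s *
        (α s 0 + 2 * ∑ l ∈ Finset.Icc 1 m, α s l * Real.cos (l * (j.1 + 1) * π * h))) = 0 →
      let x : Fin n → ℂ := fun k => (Real.sin ((j.1 + 1) * π * (k.1 + 1) * h) : ℝ)
      x ≠ 0 ∧ (∑ s ∈ Finset.range (q + 1), lam ^ s • (A s)).mulVec x = 0 := by
  intro j lam hlam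
  intro x
  have hx : ∀ k : Fin n, x k = ((Real.sin ((j.1 + 1) * π * (k.1 + 1) * h) : ℝ) : ℂ) :=
    fun k => rfl
  have hnR : ((n:ℝ)+1) ≠ 0 := by positivity
  set θ : ℝ := (j.1+1) * π * h with hθdef
  set g : ℤ → ℂ := fun t => ((Real.sin (θ * t) : ℝ) : ℂ) with hgdef
  set c : ℕ → ℂ := fun l => ((2 * Real.cos (l * θ) : ℝ) : ℂ) with hcdef
  have hθn1 : θ * ((n:ℝ)+1) = (j.1+1) * π := by
    rw [hθdef, hh]; field_simp
  have hg0 : g 0 = 0 := by simp [hgdef]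
  have hgn : g ((n:ℤ)+1) = 0 := by
    have e : θ * (((n:ℤ)+1 : ℤ) : ℝ) = ((j.1+1 : ℕ) : ℝ) * π := by
      push_cast; push_cast at hθn1; linarith [hθn1]
    simp only [hgdef]
    rw [e, Real.sin_nat_mul_pi]; simp
  have hodd : ∀ t : ℤ, g (-t) = - g t := by
    intro t
    simp only [hgdef]
    rw [show θ * ((-t : ℤ) : ℝ) = -(θ * (t : ℝ)) by push_cast; ring, Real.sin_neg]
    push_cast; ring
  have hrefl : ∀ t : ℤ, g (2*((n:ℤ)+1) - t) = - g t := by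
    intro t
    simp only [hgdef]
    have e : θ * ((2*((n:ℤ)+1) - t : ℤ) : ℝ) = ((2*(j.1+1) : ℕ) : ℝ) * π - θ * (t : ℝ) := by
      push_cast
      have : θ * (2*((n:ℝ)+1) - (t:ℝ)) = 2 * (θ * ((n:ℝ)+1)) - θ * t := by ring
      rw [this, hθn1]; ring
    rw [e, Real.sin_sub, Real.sin_nat_mul_pi]
    have hc1 : Real.cos (((2*(j.1+1) : ℕ) : ℝ) * π) = 1 := by
      have := Real.cos_nat_mul_two_pi (j.1+1)
      rw [show (((2*(j.1+1) : ℕ) : ℝ) * π) = ((j.1+1 : ℕ) : ℝ) * (2 * π) by push_cast; ring]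
      exact this
    rw [hc1]
    push_cast; ring
  have hcos : ∀ (a : ℤ) (l : ℕ), g (a - (l:ℤ)) + g (a + (l:ℤ)) = c l * g a := by
    intro a l
    simp only [hgdef, hcdef]
    have hr : Real.sin (θ * ((a:ℝ) - (l:ℝ))) + Real.sin (θ * ((a:ℝ) + (l:ℝ)))
        = 2 * Real.cos ((l:ℝ) * θ) * Real.sin (θ * (a:ℝ)) := by
      rw [show θ * ((a:ℝ) - (l:ℝ)) = θ*(a:ℝ) - θ*(l:ℝ) by ring,
        show θ * ((a:ℝ) + (l:ℝ)) = θ*(a:ℝ) + θ*(l:ℝ) by ring,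
        Real.sin_sub, Real.sin_add]
      ring
    have ha1 : ((a - (l:ℤ) : ℤ) : ℝ) = (a:ℝ) - (l:ℝ) := by push_cast; ring
    have ha2 : ((a + (l:ℤ) : ℤ) : ℝ) = (a:ℝ) + (l:ℝ) := by push_cast; ring
    rw [ha1, ha2]
    exact_mod_cast hr
  -- x entries via g
  have hxg : ∀ k : Fin n, x k = g ((k.1 : ℤ) + 1) := by
    intro k
    rw [hx k]
    simp only [hgdef]
    congr 1
    push_cast
    rw [hθdef]
    ring
  -- eigen-relation for each coefficient matrix
  have hrow : ∀ (ξ : ℕ → ℂ), (T ξ - H ξ).mulVec x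
      = (ξ 0 + ∑ l ∈ Finset.Icc 1 m, ξ l * c l) • x := by
    intro ξ
    funext i
    have hrs := rowsum n m hn hm2 ξ g c hg0 hgn hodd hrefl hcos i.1 i.2
    have step : ∀ k : Fin n, (T ξ - H ξ) i k * x k
        = ((if max i.1 k.1 - min i.1 k.1 ≤ m then ξ (max i.1 k.1 - min i.1 k.1) else 0)
        - (if i.1 + k.1 + 2 ≤ m then ξ (i.1+k.1+2)
           else if 2*n - (i.1+k.1) ≤ m then ξ (2*n - (i.1+k.1)) else 0)) * g ((k.1:ℤ)+1) := by
      intro k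
      rw [Matrix.sub_apply, hT, hH, hxg k]
    simp only [Matrix.mulVec, dotProduct, Pi.smul_apply, smul_eq_mul]
    rw [Finset.sum_congr rfl (fun k _ => step k)]
    rw [Fin.sum_univ_eq_sum_range (fun k =>
      ((if max i.1 k - min i.1 k ≤ m then ξ (max i.1 k - min i.1 k) else 0)
        - (if i.1 + k + 2 ≤ m then ξ (i.1+k+2)
           else if 2*n - (i.1+k) ≤ m then ξ (2*n - (i.1+k)) else 0)) * g ((k:ℤ)+1)) n]
    rw [hrs, hxg i]
  -- scalar coefficients
  set cs : ℕ → ℂ := fun s => α s 0 + ∑ l ∈ Finset.Icc 1 m, α s l * c l with hcsdef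
  have hcs : ∀ s, cs s
      = α s 0 + 2 * ∑ l ∈ Finset.Icc 1 m, α s l * (Real.cos ((l:ℝ) * (j.1 + 1) * π * h) : ℝ) := by
    intro s
    simp only [hcsdef]
    rw [Finset.mul_sum]
    congr 1
    apply Finset.sum_congr rfl
    intro l _
    simp only [hcdef]
    have e : Real.cos ((l:ℝ) * θ) = Real.cos ((l:ℝ) * (j.1 + 1) * π * h) := by
      rw [hθdef]; ring_nf
    rw [e]
    push_cast
    ring
  have hc0 : ∑ s ∈ Finset.range (q+1), lam ^ s * cs s = 0 := by
    rw [← hlam]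
    apply Finset.sum_congr rfl
    intro s _
    rw [hcs s]
  constructor
  · -- x ≠ 0
    intro hx0
    have hk0 : (0 : ℕ) < n := by omega
    have hval := congrFun hx0 ⟨0, hk0⟩
    rw [hx ⟨0, hk0⟩] at hval
    simp only [Pi.zero_apply, Complex.ofReal_eq_zero] at hval
    have hpos : 0 < Real.sin ((j.1 + 1) * π * ((0:ℕ) + 1) * h) := by
      apply Real.sin_pos_of_pos_of_lt_pi
      · have : (0:ℝ) < h := by rw [hh]; positivity
        have hπ := Real.pi_pos
        positivity
      · have hj : (j.1 : ℝ) + 1 < (n:ℝ) + 1 := by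
          have := j.2; exact_mod_cast by omega
        have hπ := Real.pi_pos
        rw [hh]
        rw [show ((j.1:ℝ) + 1) * π * ((0:ℕ) + 1) * (1/((n:ℝ)+1))
            = (((j.1:ℝ)+1) * π) / ((n:ℝ)+1) by push_cast; ring]
        rw [div_lt_iff₀ (by positivity)]
        nlinarith
    rw [hval] at hpos
    exact lt_irrefl 0 hpos
  · -- eigen equation
    have hsum : (∑ s ∈ Finset.range (q+1), lam ^ s • A s).mulVec x
        = ∑ s ∈ Finset.range (q+1), (lam ^ s • A s).mulVec x := by
      funext i
      simp only [Matrix.mulVec, dotProduct, Finset.sum_apply, Matrix.sum_apply,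
        Finset.sum_mul]
      exact Finset.sum_comm
    rw [hsum]
    have hAs : ∀ s ∈ Finset.range (q+1), (lam ^ s • A s).mulVec x = (lam ^ s * cs s) • x := by
      intro s hs
      have hsq : s ≤ q := by simp only [Finset.mem_range] at hs; omega
      rw [Matrix.smul_mulVec, hA s hsq, hrow (α s), hcsdef, smul_smul]
    rw [Finset.sum_congr rfl hAs, ← Finset.sum_smul, hc0, zero_smul]
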